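/- If A₁, A₂ ⊆ [0,1] are disjoint intervals and B₁, B₂ ⊆ ℝ are disjoint bounded intervals, then E[M(A₁) M(A₂) N(B₁) N(B₂)] = E[M(A₁) N(B₁)] · E[M(A₂) N(B₂)] + n³λ³μ² ( |A₁| Q_σ(A₂,B₁) Q_σ([0,1],B₂) + |A₂| Q_σ([0,1],B₁) Q_σ(A₁,B₂) + |A₁||A₂| Q_σ²([0,1],B₁,B₂) ) + n²λ²μ² ( Q_σ(A₂,B₁) Q_σ(A₁,B₂) + |A₁| Q_σ²(A₂,B₁,B₂) + |A₂| Q_σ²(A₁,B₁,B₂) ), where E[M(A) N(B)] = n²λ²μ |A| Q_σ([0,1],B) + nλμ Q_σ(A,B). -/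

import Mathlib

open MeasureTheory Filter Set

noncomputable section

/-- Rescaled dispersal density `f_σ(z) = σ⁻¹ f(z/σ)`. -/
def fdil (σ : ℝ) (f : ℝ → ℝ) (z : ℝ) : ℝ := σ⁻¹ * f (z / σ)

/-- The dispersal point-process model of Hoffmann–Trabs: `M` is a homogeneous Poisson
point process on `[0,1]` with intensity `n·λ·dx` and, conditionally on `M`, `N` is a Cox
point process on `ℝ` with intensity `μ (M ∗ f_σ)(y) dy`.  The joint law is characterized
through the joint Laplace functional (Campbell's formula). -/
structure IsDispersalModel {Ω : Type*} [MeasurableSpace Ω] (P : Measure Ω)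
    (n : ℕ) (lam mu σ : ℝ) (f : ℝ → ℝ) (M N : Ω → Measure ℝ) : Prop where
  prob : IsProbabilityMeasure P
  lam_pos : 0 < lam
  mu_pos : 0 < mu
  sigma_pos : 0 < σ
  sigma_le_one : σ ≤ 1
  f_meas : Measurable f
  f_nonneg : ∀ z, 0 ≤ f z
  f_prob : ∫ z, f z = 1
  M_meas : ∀ A : Set ℝ, MeasurableSet A → Measurable fun ω => M ω A
  N_meas : ∀ B : Set ℝ, MeasurableSet B → Measurable fun ω => N ω B
  M_carrier : ∀ ω, M ω (Set.Icc (0:ℝ) 1)ᶜ = 0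
  M_finite : ∀ ω, IsFiniteMeasure (M ω)
  N_locFinite : ∀ ω (B : Set ℝ), Bornology.IsBounded B → N ω B < ⊤
  laplace : ∀ g h : ℝ → ℝ, Measurable g → Measurable h →
    (∃ c, ∀ x, |g x| ≤ c) → (∃ c, ∀ y, |h y| ≤ c) →
    (∃ R, ∀ y : ℝ, R < |y| → h y = 0) →
    ∫ ω, Real.exp ((∫ x, g x ∂(M ω)) + ∫ y, h y ∂(N ω)) ∂P
      = Real.exp ((n : ℝ) * lam * ∫ x in Set.Icc (0:ℝ) 1,
          (Real.exp (g x + mu * ∫ y, (Real.exp (h y) - 1) * fdil σ f (y - x)) - 1))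

/-- `Q_σ(A,B) = ∫_A ∫_B f_σ(y−x) dy dx`. -/
def Qker (σ : ℝ) (f : ℝ → ℝ) (A B : Set ℝ) : ℝ := ∫ x in A, ∫ y in B, fdil σ f (y - x)

/-- `Q²_σ(A,B₁,B₂) = ∫_A ∫_{B₁} ∫_{B₂} f_σ(y₁−x) f_σ(y₂−x) dy₂ dy₁ dx`. -/
def Q2ker (σ : ℝ) (f : ℝ → ℝ) (A B₁ B₂ : Set ℝ) : ℝ :=
  ∫ x in A, ∫ y₁ in B₁, ∫ y₂ in B₂, fdil σ f (y₁ - x) * fdil σ f (y₂ - x)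

end


noncomputable section Aux

/-- indicator with value 1 -/
def indf (A : Set ℝ) (x : ℝ) : ℝ := A.indicator (fun _ => (1:ℝ)) x

/-- the kernel `q_B(x) = ∫_B f_σ(y-x) dy` -/
def qf (σ : ℝ) (f : ℝ → ℝ) (B : Set ℝ) (x : ℝ) : ℝ := ∫ y in B, fdil σ f (y - x)

section prelim

variable {σ : ℝ} {f : ℝ → ℝ}

lemma fdil_meas (hf : Measurable f) : Measurable (fdil σ f) := by
  unfold fdil
  exact (hf.comp (measurable_id.div_const σ)).const_mul _

lemma fdil_nonneg (hσ : 0 < σ) (hf : ∀ z, 0 ≤ f z) (z : ℝ) : 0 ≤ fdil σ f z :=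
  mul_nonneg (by positivity) (hf _)

lemma f_integrable (hf : Measurable f) (hprob : ∫ z, f z = 1) : Integrable f := by
  by_contra h
  rw [integral_undef h] at hprob
  norm_num at hprob

lemma fdil_integrable (hσ : 0 < σ) (hf : Measurable f) (hprob : ∫ z, f z = 1) :
    Integrable (fdil σ f) := by
  unfold fdil
  have h1 : Integrable (fun z : ℝ => f z) := f_integrable hf hprob
  have : Integrable (fun z : ℝ => f (z * σ⁻¹)) :=
    (integrable_comp_mul_right_iff f (inv_ne_zero hσ.ne')).2 h1
  simp only [← div_eq_mul_inv] at this
  exact this.const_mul _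

lemma fdil_int_one (hσ : 0 < σ) (hf : Measurable f) (hprob : ∫ z, f z = 1) :
    ∫ z, fdil σ f z = 1 := by
  unfold fdil
  rw [integral_const_mul, MeasureTheory.Measure.integral_comp_div (fun z => f z) σ, hprob]
  simp [abs_of_pos hσ]
  field_simp

end prelim

section prelim2

variable {σ : ℝ} {f : ℝ → ℝ}

lemma fdil_sub_integrable (hσ : 0 < σ) (hf : Measurable f) (hprob : ∫ z, f z = 1) (x : ℝ) :
    Integrable (fun y => fdil σ f (y - x)) :=
  (fdil_integrable hσ hf hprob).comp_sub_right x

lemma fdil_sub_int_one (hσ : 0 < σ) (hf : Measurable f) (hprob : ∫ z, f z = 1) (x : ℝ) :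
    ∫ y, fdil σ f (y - x) = 1 := by
  rw [integral_sub_right_eq_self (fdil σ f) x]
  exact fdil_int_one hσ hf hprob

lemma qf_nonneg (hσ : 0 < σ) (hf0 : ∀ z, 0 ≤ f z) (B : Set ℝ) (x : ℝ) : 0 ≤ qf σ f B x :=
  integral_nonneg (fun y => fdil_nonneg hσ hf0 _)

lemma qf_le_one (hσ : 0 < σ) (hf : Measurable f) (hf0 : ∀ z, 0 ≤ f z)
    (hprob : ∫ z, f z = 1) (B : Set ℝ) (x : ℝ) : qf σ f B x ≤ 1 := by
  have h1 := fdil_sub_integrable hσ hf hprob x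
  calc qf σ f B x ≤ ∫ y, fdil σ f (y - x) :=
        setIntegral_le_integral h1 (Eventually.of_forall fun y => fdil_nonneg hσ hf0 _)
    _ = 1 := fdil_sub_int_one hσ hf hprob x

lemma qf_abs_le_one (hσ : 0 < σ) (hf : Measurable f) (hf0 : ∀ z, 0 ≤ f z)
    (hprob : ∫ z, f z = 1) (B : Set ℝ) (x : ℝ) : |qf σ f B x| ≤ 1 := by
  rw [abs_of_nonneg (qf_nonneg hσ hf0 B x)]; exact qf_le_one hσ hf hf0 hprob B x

lemma qf_meas (hσ : 0 < σ) (hf : Measurable f) (hB : MeasurableSet B) :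
    Measurable (qf σ f B) := by
  have h : StronglyMeasurable (fun p : ℝ × ℝ => B.indicator (fun _ => (1:ℝ)) p.2 *
      fdil σ f (p.2 - p.1)) := by
    apply Measurable.stronglyMeasurable
    exact ((measurable_const.indicator hB).comp measurable_snd).mul
      ((fdil_meas hf).comp (measurable_snd.sub measurable_fst))
  have h2 := h.integral_prod_right' (ν := volume)
  have : qf σ f B = fun x => ∫ y, B.indicator (fun _ => (1:ℝ)) y * fdil σ f (y - x) := by
    funext x
    unfold qf
    rw [← integral_indicator hB]
    congr 1
    funext y
    by_cases hy : y ∈ B <;> simp [hy]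
  rw [this]
  exact h2.measurable

lemma indf_meas {A : Set ℝ} (hA : MeasurableSet A) : Measurable (indf A) :=
  measurable_const.indicator hA

lemma indf_nonneg (A : Set ℝ) (x : ℝ) : 0 ≤ indf A x := by
  unfold indf; by_cases h : x ∈ A <;> simp [h]

lemma indf_le_one (A : Set ℝ) (x : ℝ) : indf A x ≤ 1 := by
  unfold indf; by_cases h : x ∈ A <;> simp [h]

lemma indf_abs_le_one (A : Set ℝ) (x : ℝ) : |indf A x| ≤ 1 := by
  rw [abs_of_nonneg (indf_nonneg A x)]; exact indf_le_one A x

/-- integrability of bounded measurable functions on finite-measure sets -/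
lemma integrableOn_of_bdd {A : Set ℝ} (hAfin : volume A ≠ ⊤) {g : ℝ → ℝ}
    (hg : Measurable g) {C : ℝ} (hC : ∀ x, |g x| ≤ C) : IntegrableOn g A volume := by
  have : IntegrableOn (fun _ : ℝ => C) A volume :=
    integrableOn_const hAfin
  exact Integrable.mono' this hg.aestronglyMeasurable (Eventually.of_forall hC)

end prelim2

section deriv

open Metric in
/-- Differentiation under the integral sign, for set integrals of
`V x * exp (φ s * U x + R x)` with bounded data. -/
lemma x_deriv {A : Set ℝ} (hAfin : volume A ≠ ⊤)
    {V U R : ℝ → ℝ} (hV : Measurable V) (hU : Measurable U) (hR : Measurable R)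
    {KV KU KR : ℝ} (hVb : ∀ x, |V x| ≤ KV) (hUb : ∀ x, |U x| ≤ KU) (hRb : ∀ x, |R x| ≤ KR)
    {φ φ' : ℝ → ℝ} (hφ : ∀ s, HasDerivAt φ (φ' s) s) {Kφ : ℝ} (s₀ : ℝ)
    (hφb : ∀ s ∈ ball s₀ 1, |φ s| ≤ Kφ ∧ |φ' s| ≤ Kφ) :
    HasDerivAt (fun s => ∫ x in A, V x * Real.exp (φ s * U x + R x))
      (∫ x in A, V x * (φ' s₀ * U x) * Real.exp (φ s₀ * U x + R x)) s₀ := by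
  have hKV : 0 ≤ KV := le_trans (abs_nonneg _) (hVb 0)
  have hKU : 0 ≤ KU := le_trans (abs_nonneg _) (hUb 0)
  have hKR : 0 ≤ KR := le_trans (abs_nonneg _) (hRb 0)
  have hKφ : 0 ≤ Kφ := le_trans (abs_nonneg _) (hφb s₀ (mem_ball_self one_pos)).1
  have hmeas : ∀ s : ℝ, AEStronglyMeasurable (fun x => V x * Real.exp (φ s * U x + R x))
      (volume.restrict A) := fun s =>
    (hV.mul (((hU.const_mul (φ s)).add hR).exp)).aestronglyMeasurable
  have key := hasDerivAt_integral_of_dominated_loc_of_deriv_le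
    (μ := volume.restrict A) (x₀ := s₀)
    (F := fun s x => V x * Real.exp (φ s * U x + R x))
    (F' := fun s x => V x * (φ' s * U x) * Real.exp (φ s * U x + R x))
    (bound := fun _ => KV * (Kφ * KU) * Real.exp (Kφ * KU + KR))
    (Metric.ball_mem_nhds s₀ one_pos) (Eventually.of_forall hmeas)
    (integrableOn_of_bdd hAfin (hV.mul (((hU.const_mul (φ s₀)).add hR).exp))
      (C := KV * Real.exp (Kφ * KU + KR)) ?_)
    (((hV.mul (hU.const_mul (φ' s₀))).mul
      (((hU.const_mul (φ s₀)).add hR).exp)).aestronglyMeasurable)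
    (Eventually.of_forall ?_)
    (integrableOn_const hAfin) (Eventually.of_forall ?_)
  · exact key.2
  · -- integrability of F s₀
    intro x
    rw [abs_mul, Real.abs_exp]
    have h1 : φ s₀ * U x + R x ≤ Kφ * KU + KR := by
      have := (hφb s₀ (mem_ball_self one_pos)).1
      have h2 : φ s₀ * U x ≤ |φ s₀ * U x| := le_abs_self _
      rw [abs_mul] at h2
      nlinarith [abs_nonneg (U x), le_abs_self (R x), hRb x, hUb x, abs_nonneg (φ s₀)]
    exact mul_le_mul (hVb x) (Real.exp_le_exp.2 h1) (Real.exp_pos _).le hKV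
  · -- bound on F'
    intro x s hs
    have hb := hφb s hs
    rw [Real.norm_eq_abs, abs_mul, abs_mul, abs_mul, Real.abs_exp]
    have h1 : φ s * U x + R x ≤ Kφ * KU + KR := by
      have h2 : φ s * U x ≤ |φ s| * |U x| := by rw [← abs_mul]; exact le_abs_self _
      nlinarith [abs_nonneg (U x), le_abs_self (R x), hRb x, hUb x, abs_nonneg (φ s),
        hb.1, hUb x]
    have h3 : |φ' s| * |U x| ≤ Kφ * KU := by
      apply mul_le_mul hb.2 (hUb x) (abs_nonneg _) hKφ
    have h4 : Real.exp (φ s * U x + R x) ≤ Real.exp (Kφ * KU + KR) := Real.exp_le_exp.2 h1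
    have h5 : |V x| * (|φ' s| * |U x|) ≤ KV * (Kφ * KU) :=
      mul_le_mul (hVb x) h3 (mul_nonneg (abs_nonneg _) (abs_nonneg _)) hKV
    exact mul_le_mul h5 h4 (Real.exp_pos _).le (mul_nonneg hKV (mul_nonneg hKφ hKU))
  · -- pointwise differentiability
    intro x s hs
    have h1 : HasDerivAt (fun s => φ s * U x + R x) (φ' s * U x) s :=
      ((hφ s).mul_const (U x)).add_const (R x)
    have h2 := (h1.exp).const_mul (V x)
    exact h2.congr_deriv (by ring)

end deriv

section derivOmega

open Metric

variable {Ω : Type*} [MeasurableSpace Ω] {P : Measure Ω}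

/-- Differentiation under the integral sign, over Ω, for `V ω * exp (s * U ω + R ω)`,
dominated by exponential moments of `T`. -/
lemma omega_deriv (T : Ω → ℝ) (hT0 : ∀ ω, 0 ≤ T ω)
    (hint : ∀ t : ℝ, Integrable (fun ω => Real.exp (t * T ω)) P)
    {V U R : Ω → ℝ} (hV : Measurable V) (hU : Measurable U) (hR : Measurable R)
    {KV KR : ℝ} (hVb : ∀ ω, |V ω| ≤ Real.exp (KV * T ω)) (hU0 : ∀ ω, 0 ≤ U ω)
    (hUb : ∀ ω, U ω ≤ T ω) (hRb : ∀ ω, |R ω| ≤ KR * T ω) (s₀ : ℝ) :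
    HasDerivAt (fun s => ∫ ω, V ω * Real.exp (s * U ω + R ω) ∂P)
      (∫ ω, V ω * U ω * Real.exp (s₀ * U ω + R ω) ∂P) s₀ := by
  set C : ℝ := KV + KR + |s₀| + 2 with hC
  have hTexp : ∀ ω, T ω ≤ Real.exp (T ω) := fun ω =>
    le_trans (by linarith) (Real.add_one_le_exp (T ω))
  have hexpo : ∀ s ∈ ball s₀ 1, ∀ ω, s * U ω + R ω ≤ (|s₀| + 1 + KR) * T ω := by
    intro s hs ω
    have hsb : |s| ≤ |s₀| + 1 := by
      have := mem_ball_iff_norm.1 hs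
      rw [Real.norm_eq_abs] at this
      have := abs_sub_abs_le_abs_sub s s₀
      linarith
    have h1 : s * U ω ≤ (|s₀| + 1) * U ω := by
      apply mul_le_mul_of_nonneg_right _ (hU0 ω)
      exact le_trans (le_abs_self s) hsb
    have h2 : (|s₀| + 1) * U ω ≤ (|s₀| + 1) * T ω :=
      mul_le_mul_of_nonneg_left (hUb ω) (by positivity)
    have h3 : R ω ≤ KR * T ω := le_trans (le_abs_self _) (hRb ω)
    linarith
  have hbnd : ∀ s ∈ ball s₀ 1, ∀ ω,
      |V ω| * Real.exp (s * U ω + R ω) ≤ Real.exp ((KV + KR + |s₀| + 1) * T ω) := by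
    intro s hs ω
    calc |V ω| * Real.exp (s * U ω + R ω)
        ≤ Real.exp (KV * T ω) * Real.exp ((|s₀| + 1 + KR) * T ω) :=
          mul_le_mul (hVb ω) (Real.exp_le_exp.2 (hexpo s hs ω)) (Real.exp_pos _).le
            (Real.exp_pos _).le
      _ = Real.exp ((KV + KR + |s₀| + 1) * T ω) := by rw [← Real.exp_add]; ring_nf
  have hmeas : ∀ s : ℝ, AEStronglyMeasurable (fun ω => V ω * Real.exp (s * U ω + R ω)) P :=
    fun s => (hV.mul (((hU.const_mul s).add hR).exp)).aestronglyMeasurable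
  have key := hasDerivAt_integral_of_dominated_loc_of_deriv_le (μ := P) (x₀ := s₀)
    (F := fun s ω => V ω * Real.exp (s * U ω + R ω))
    (F' := fun s ω => V ω * U ω * Real.exp (s * U ω + R ω))
    (bound := fun ω => Real.exp (C * T ω))
    (Metric.ball_mem_nhds s₀ one_pos) (Eventually.of_forall hmeas) ?_
    (((hV.mul hU).mul (((hU.const_mul s₀).add hR).exp)).aestronglyMeasurable)
    (Eventually.of_forall ?_) (hint C) (Eventually.of_forall ?_)
  · exact key.2
  · -- integrability of F s₀
    apply (hint C).mono' (hmeas s₀)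
    apply Eventually.of_forall
    intro ω
    rw [Real.norm_eq_abs, abs_mul, Real.abs_exp]
    calc |V ω| * Real.exp (s₀ * U ω + R ω)
        ≤ Real.exp ((KV + KR + |s₀| + 1) * T ω) :=
          hbnd s₀ (mem_ball_self one_pos) ω
      _ ≤ Real.exp (C * T ω) := by
          rw [Real.exp_le_exp, hC]
          nlinarith [hT0 ω]
  · -- bound on F'
    intro ω s hs
    rw [Real.norm_eq_abs, abs_mul, abs_mul, Real.abs_exp, abs_of_nonneg (hU0 ω)]
    calc |V ω| * U ω * Real.exp (s * U ω + R ω)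
        ≤ |V ω| * Real.exp (T ω) * Real.exp (s * U ω + R ω) := by
          apply mul_le_mul_of_nonneg_right _ (Real.exp_pos _).le
          exact mul_le_mul_of_nonneg_left ((hUb ω).trans (hTexp ω)) (abs_nonneg _)
      _ = |V ω| * Real.exp (s * U ω + R ω) * Real.exp (T ω) := by ring
      _ ≤ Real.exp ((KV + KR + |s₀| + 1) * T ω) * Real.exp (T ω) :=
          mul_le_mul_of_nonneg_right (hbnd s hs ω) (Real.exp_pos _).le
      _ = Real.exp (C * T ω) := by rw [← Real.exp_add]; congr 1; rw [hC]; ring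
  · -- pointwise differentiability
    intro ω s hs
    have h1 : HasDerivAt (fun s => s * U ω + R ω) (U ω) s := by
      simpa using ((hasDerivAt_id s).mul_const (U ω)).add_const (R ω)
    have h2 := (h1.exp).const_mul (V ω)
    exact h2.congr_deriv (by ring)

end derivOmega

section MasterDefs

/-- real-valued mass of a set under a random measure -/
def mes {Ω : Type*} (M : Ω → Measure ℝ) (A : Set ℝ) (ω : Ω) : ℝ := (M ω A).toReal

/-- the exponent kernel `κ_{c,d}(x)` -/
def kap (mu σ : ℝ) (f : ℝ → ℝ) (B₁ B₂ : Set ℝ) (c d x : ℝ) : ℝ :=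
  mu * (Real.exp c - 1) * qf σ f B₁ x + mu * (Real.exp d - 1) * qf σ f B₂ x

def EE (mu σ : ℝ) (f : ℝ → ℝ) (A₁ A₂ B₁ B₂ : Set ℝ) (a b c d : ℝ) : ℝ :=
  ∫ x in Set.Icc (0:ℝ) 1,
    Real.exp (a * indf A₁ x + (b * indf A₂ x + kap mu σ f B₁ B₂ c d x))

def PPc (mu σ : ℝ) (f : ℝ → ℝ) (A B₁ B₂ : Set ℝ) (c d : ℝ) : ℝ :=
  ∫ x in A, Real.exp (kap mu σ f B₁ B₂ c d x)

def PP (mu σ : ℝ) (f : ℝ → ℝ) (A B₂ : Set ℝ) (d : ℝ) : ℝ :=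
  ∫ x in A, Real.exp (mu * (Real.exp d - 1) * qf σ f B₂ x)

def TT (mu σ : ℝ) (f : ℝ → ℝ) (A B₁ B₂ : Set ℝ) (d : ℝ) : ℝ :=
  ∫ x in A, qf σ f B₁ x * Real.exp (mu * (Real.exp d - 1) * qf σ f B₂ x)

end MasterDefs

section Master

variable {Ω : Type*} [MeasurableSpace Ω] {P : Measure Ω} {n : ℕ} {lam mu σ : ℝ}
  {f : ℝ → ℝ} {M N : Ω → Measure ℝ} {A₁ A₂ B₁ B₂ : Set ℝ}

lemma kap_abs_le (hσ : 0 < σ) (hfm : Measurable f) (hf0 : ∀ z, 0 ≤ f z)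
    (hfp : ∫ z, f z = 1) (c d : ℝ) (x : ℝ) :
    |kap mu σ f B₁ B₂ c d x| ≤ |mu| * (Real.exp |c| + 1) + |mu| * (Real.exp |d| + 1) := by
  unfold kap
  have h1 := qf_abs_le_one hσ hfm hf0 hfp B₁ x
  have h2 := qf_abs_le_one hσ hfm hf0 hfp B₂ x
  have e1 : |Real.exp c - 1| ≤ Real.exp |c| + 1 := by
    calc |Real.exp c - 1| ≤ |Real.exp c| + |(1:ℝ)| := abs_sub _ _
      _ ≤ Real.exp |c| + 1 := by
          rw [Real.abs_exp, abs_one]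
          have := Real.exp_le_exp.2 (le_abs_self c)
          linarith
  have e2 : |Real.exp d - 1| ≤ Real.exp |d| + 1 := by
    calc |Real.exp d - 1| ≤ |Real.exp d| + |(1:ℝ)| := abs_sub _ _
      _ ≤ Real.exp |d| + 1 := by
          rw [Real.abs_exp, abs_one]
          have := Real.exp_le_exp.2 (le_abs_self d)
          linarith
  calc |mu * (Real.exp c - 1) * qf σ f B₁ x + mu * (Real.exp d - 1) * qf σ f B₂ x|
      ≤ |mu * (Real.exp c - 1) * qf σ f B₁ x| + |mu * (Real.exp d - 1) * qf σ f B₂ x| :=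
        abs_add_le _ _
    _ ≤ |mu| * (Real.exp |c| + 1) + |mu| * (Real.exp |d| + 1) := by
        rw [abs_mul, abs_mul, abs_mul, abs_mul]
        have p1 : |mu| * |Real.exp c - 1| * |qf σ f B₁ x| ≤ |mu| * (Real.exp |c| + 1) * 1 := by
          apply mul_le_mul (mul_le_mul le_rfl e1 (abs_nonneg _) (abs_nonneg _)) h1
            (abs_nonneg _) (by positivity)
        have p2 : |mu| * |Real.exp d - 1| * |qf σ f B₂ x| ≤ |mu| * (Real.exp |d| + 1) * 1 := by
          apply mul_le_mul (mul_le_mul le_rfl e2 (abs_nonneg _) (abs_nonneg _)) h2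
            (abs_nonneg _) (by positivity)
        linarith
  
lemma kap_meas (hσ : 0 < σ) (hfm : Measurable f) (hB₁m : MeasurableSet B₁)
    (hB₂m : MeasurableSet B₂) (c d : ℝ) : Measurable (kap mu σ f B₁ B₂ c d) :=
  ((qf_meas hσ hfm hB₁m).const_mul _).add ((qf_meas hσ hfm hB₂m).const_mul _)

lemma lap_eq (model : IsDispersalModel P n lam mu σ f M N)
    (hA₁m : MeasurableSet A₁) (hA₂m : MeasurableSet A₂)
    (hB₁m : MeasurableSet B₁) (hB₂m : MeasurableSet B₂)
    (hB₁b : Bornology.IsBounded B₁) (hB₂b : Bornology.IsBounded B₂)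
    (hBd : Disjoint B₁ B₂) (a b c d : ℝ) :
    ∫ ω, Real.exp (a * mes M A₁ ω + (b * mes M A₂ ω
        + (c * mes N B₁ ω + d * mes N B₂ ω))) ∂P
      = Real.exp ((n * lam) * (EE mu σ f A₁ A₂ B₁ B₂ a b c d - 1)) := by
  have hσ := model.sigma_pos
  have hfm := model.f_meas
  have hf0 := model.f_nonneg
  have hfp := model.f_prob
  set g : ℝ → ℝ := fun x => a * indf A₁ x + b * indf A₂ x with hg
  set h : ℝ → ℝ := fun y => c * indf B₁ y + d * indf B₂ y with hh
  have hgm : Measurable g := ((indf_meas hA₁m).const_mul a).add ((indf_meas hA₂m).const_mul b)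
  have hhm : Measurable h := ((indf_meas hB₁m).const_mul c).add ((indf_meas hB₂m).const_mul d)
  have habs : ∀ (u v : ℝ) (S T : Set ℝ) (x : ℝ),
      |u * indf S x + v * indf T x| ≤ |u| + |v| := by
    intro u v S T x
    calc |u * indf S x + v * indf T x| ≤ |u * indf S x| + |v * indf T x| := abs_add_le _ _
      _ ≤ |u| + |v| := by
          rw [abs_mul, abs_mul]
          have := indf_abs_le_one S x
          have := indf_abs_le_one T x
          nlinarith [abs_nonneg u, abs_nonneg v, abs_nonneg (indf S x), abs_nonneg (indf T x)]
  have hgb : ∃ C, ∀ x, |g x| ≤ C := ⟨|a| + |b|, fun x => habs a b A₁ A₂ x⟩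
  have hhb : ∃ C, ∀ y, |h y| ≤ C := ⟨|c| + |d|, fun y => habs c d B₁ B₂ y⟩
  have hh0 : ∃ R, ∀ y : ℝ, R < |y| → h y = 0 := by
    obtain ⟨r₁, hr₁⟩ := hB₁b.subset_closedBall 0
    obtain ⟨r₂, hr₂⟩ := hB₂b.subset_closedBall 0
    refine ⟨max r₁ r₂, fun y hy => ?_⟩
    have h1 : y ∉ B₁ := fun hmem => by
      have := hr₁ hmem
      rw [Metric.mem_closedBall, Real.dist_eq, sub_zero] at this
      have := le_max_left r₁ r₂
      linarith
    have h2 : y ∉ B₂ := fun hmem => by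
      have := hr₂ hmem
      rw [Metric.mem_closedBall, Real.dist_eq, sub_zero] at this
      have := le_max_right r₁ r₂
      linarith
    simp [hh, indf, h1, h2]
  have key := model.laplace g h hgm hhm hgb hhb hh0
  -- rewrite the LHS
  have hL : ∀ ω, (∫ x, g x ∂(M ω)) + ∫ y, h y ∂(N ω)
      = a * mes M A₁ ω + (b * mes M A₂ ω + (c * mes N B₁ ω + d * mes N B₂ ω)) := by
    intro ω
    haveI := model.M_finite ω
    have hM1 : Integrable (indf A₁) (M ω) := (integrable_const (1:ℝ)).indicator hA₁m
    have hM2 : Integrable (indf A₂) (M ω) := (integrable_const (1:ℝ)).indicator hA₂m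
    have hN1 : Integrable (indf B₁) (N ω) := (integrable_indicator_iff hB₁m).2
      (integrableOn_const (model.N_locFinite ω B₁ hB₁b).ne)
    have hN2 : Integrable (indf B₂) (N ω) := (integrable_indicator_iff hB₂m).2
      (integrableOn_const (model.N_locFinite ω B₂ hB₂b).ne)
    have e1 : ∫ x, g x ∂(M ω) = a * (M ω A₁).toReal + b * (M ω A₂).toReal := by
      rw [hg]
      rw [integral_add (hM1.const_mul a) (hM2.const_mul b), integral_const_mul,
        integral_const_mul]
      unfold indf
      rw [integral_indicator_const (1:ℝ) hA₁m, integral_indicator_const (1:ℝ) hA₂m]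
      simp [mul_comm, measureReal_def]
    have e2 : ∫ y, h y ∂(N ω) = c * (N ω B₁).toReal + d * (N ω B₂).toReal := by
      rw [hh]
      rw [integral_add (hN1.const_mul c) (hN2.const_mul d), integral_const_mul,
        integral_const_mul]
      unfold indf
      rw [integral_indicator_const (1:ℝ) hB₁m, integral_indicator_const (1:ℝ) hB₂m]
      simp [mul_comm, measureReal_def]
    rw [e1, e2]
    unfold mes
    ring
  have hLfun : (fun ω => Real.exp ((∫ x, g x ∂(M ω)) + ∫ y, h y ∂(N ω)))
      = fun ω => Real.exp (a * mes M A₁ ω + (b * mes M A₂ ω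
          + (c * mes N B₁ ω + d * mes N B₂ ω))) := funext fun ω => by rw [hL ω]
  rw [hLfun] at key
  -- rewrite the RHS
  have hinner : ∀ x : ℝ, (∫ y, (Real.exp (h y) - 1) * fdil σ f (y - x))
      = (Real.exp c - 1) * qf σ f B₁ x + (Real.exp d - 1) * qf σ f B₂ x := by
    intro x
    have hfi := fdil_sub_integrable hσ hfm hfp x
    have hpt : (fun y => (Real.exp (h y) - 1) * fdil σ f (y - x))
        = fun y => B₁.indicator (fun y => (Real.exp c - 1) * fdil σ f (y - x)) y
          + B₂.indicator (fun y => (Real.exp d - 1) * fdil σ f (y - x)) y := by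
      funext y
      by_cases h1 : y ∈ B₁
      · have h2 : y ∉ B₂ := Set.disjoint_left.1 hBd h1
        simp [hh, indf, h1, h2]
      · by_cases h2 : y ∈ B₂ <;> simp [hh, indf, h1, h2]
    rw [hpt, integral_add ((hfi.const_mul _).indicator hB₁m) ((hfi.const_mul _).indicator hB₂m),
      integral_indicator hB₁m, integral_indicator hB₂m, integral_const_mul, integral_const_mul]
    rfl
  have hRfun : (fun x => Real.exp (g x + mu * ∫ y, (Real.exp (h y) - 1) * fdil σ f (y - x)) - 1)
      = fun x => Real.exp (a * indf A₁ x + (b * indf A₂ x + kap mu σ f B₁ B₂ c d x)) - 1 := by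
    funext x
    rw [hinner x, hg]
    unfold kap
    ring_nf
  rw [hRfun] at key
  -- split off the constant 1
  have hmeasI : Measurable (fun x => Real.exp (a * indf A₁ x
      + (b * indf A₂ x + kap mu σ f B₁ B₂ c d x))) :=
    (((indf_meas hA₁m).const_mul a).add (((indf_meas hA₂m).const_mul b).add
      (kap_meas hσ hfm hB₁m hB₂m c d))).exp
  have hbd : ∀ x, |Real.exp (a * indf A₁ x + (b * indf A₂ x + kap mu σ f B₁ B₂ c d x))|
      ≤ Real.exp (|a| + |b| + (|mu| * (Real.exp |c| + 1) + |mu| * (Real.exp |d| + 1))) := by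
    intro x
    rw [Real.abs_exp, Real.exp_le_exp]
    have k1 := kap_abs_le (mu := mu) (B₁ := B₁) (B₂ := B₂) hσ hfm hf0 hfp c d x
    have i1 : a * indf A₁ x ≤ |a| := by
      have := indf_abs_le_one A₁ x
      have h2 : a * indf A₁ x ≤ |a * indf A₁ x| := le_abs_self _
      rw [abs_mul] at h2
      nlinarith [abs_nonneg a, abs_nonneg (indf A₁ x)]
    have i2 : b * indf A₂ x ≤ |b| := by
      have := indf_abs_le_one A₂ x
      have h2 : b * indf A₂ x ≤ |b * indf A₂ x| := le_abs_self _
      rw [abs_mul] at h2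
      nlinarith [abs_nonneg b, abs_nonneg (indf A₂ x)]
    have k2 : kap mu σ f B₁ B₂ c d x
        ≤ |mu| * (Real.exp |c| + 1) + |mu| * (Real.exp |d| + 1) :=
      le_trans (le_abs_self _) k1
    linarith
  have hIccFin : volume (Set.Icc (0:ℝ) 1) ≠ ⊤ := by
    rw [Real.volume_Icc]
    exact ENNReal.ofReal_ne_top
  have hint1 : IntegrableOn (fun x => Real.exp (a * indf A₁ x
      + (b * indf A₂ x + kap mu σ f B₁ B₂ c d x))) (Set.Icc (0:ℝ) 1) volume :=
    integrableOn_of_bdd hIccFin hmeasI hbd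
  rw [integral_sub hint1 (integrableOn_const hIccFin)] at key
  rw [key, setIntegral_const]
  unfold EE
  congr 2
  rw [Real.volume_real_Icc]
  norm_num

end Master

def EE2 (mu σ : ℝ) (f : ℝ → ℝ) (A₂ B₁ B₂ : Set ℝ) (b c d : ℝ) : ℝ :=
  ∫ x in Set.Icc (0:ℝ) 1, Real.exp (b * indf A₂ x + kap mu σ f B₁ B₂ c d x)

def tot {Ω : Type*} (M N : Ω → Measure ℝ) (A₁ A₂ B₁ B₂ : Set ℝ) (ω : Ω) : ℝ :=
  mes M A₁ ω + mes M A₂ ω + mes N B₁ ω + mes N B₂ ω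

section Master2

variable {Ω : Type*} [MeasurableSpace Ω] {P : Measure Ω} {n : ℕ} {lam mu σ : ℝ}
  {f : ℝ → ℝ} {M N : Ω → Measure ℝ} {A A₁ A₂ B B₁ B₂ : Set ℝ}

lemma Qker_eq : Qker σ f A B = ∫ x in A, qf σ f B x := rfl

lemma Q2ker_eq : Q2ker σ f A B₁ B₂ = ∫ x in A, qf σ f B₁ x * qf σ f B₂ x := by
  unfold Q2ker qf
  congr 1
  funext x
  calc ∫ y₁ in B₁, ∫ y₂ in B₂, fdil σ f (y₁ - x) * fdil σ f (y₂ - x)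
      = ∫ y₁ in B₁, fdil σ f (y₁ - x) * ∫ y₂ in B₂, fdil σ f (y₂ - x) := by
        congr 1
        funext y₁
        exact integral_const_mul _ _
    _ = (∫ y₁ in B₁, fdil σ f (y₁ - x)) * ∫ y₂ in B₂, fdil σ f (y₂ - x) :=
        integral_mul_const _ _

lemma EE_zero (b c d : ℝ) :
    EE mu σ f A₁ A₂ B₁ B₂ 0 b c d = EE2 mu σ f A₂ B₁ B₂ b c d := by
  unfold EE EE2
  simp only [zero_mul, zero_add]

lemma EE2_zero (c d : ℝ) :
    EE2 mu σ f A₂ B₁ B₂ 0 c d = PPc mu σ f (Set.Icc (0:ℝ) 1) B₁ B₂ c d := by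
  unfold EE2 PPc
  simp only [zero_mul, zero_add]

lemma PPc_zero (d : ℝ) : PPc mu σ f A B₁ B₂ 0 d = PP mu σ f A B₂ d := by
  unfold PPc PP kap
  simp only [Real.exp_zero, sub_self, mul_zero, zero_mul, zero_add]

lemma PP_zero : PP mu σ f A B₂ 0 = (volume A).toReal := by
  unfold PP
  simp only [Real.exp_zero, sub_self, mul_zero, zero_mul, Real.exp_zero]
  simp [setIntegral_const, measureReal_def]

lemma PP_Icc_zero : PP mu σ f (Set.Icc (0:ℝ) 1) B₂ 0 = 1 := by
  rw [PP_zero, Real.volume_Icc]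
  norm_num

lemma TT_zero : TT mu σ f A B₁ B₂ 0 = Qker σ f A B₁ := by
  unfold TT
  rw [Qker_eq]
  simp only [Real.exp_zero, sub_self, mul_zero, zero_mul, Real.exp_zero, mul_one]

lemma vol_fin (hAs : A ⊆ Set.Icc (0:ℝ) 1) : volume A ≠ ⊤ := by
  have h1 : volume A ≤ volume (Set.Icc (0:ℝ) 1) := measure_mono hAs
  have h2 : volume (Set.Icc (0:ℝ) 1) ≠ ⊤ := by
    rw [Real.volume_Icc]; exact ENNReal.ofReal_ne_top
  exact ne_top_of_le_ne_top h2 h1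

lemma vol_Icc_fin : volume (Set.Icc (0:ℝ) 1) ≠ ⊤ := vol_fin subset_rfl

/-- pull an indicator out of a set integral -/
lemma pull_ind (hAm : MeasurableSet A) (hAs : A ⊆ Set.Icc (0:ℝ) 1) (g : ℝ → ℝ) :
    ∫ x in Set.Icc (0:ℝ) 1, indf A x * g x = ∫ x in A, g x := by
  have h1 : (fun x => indf A x * g x) = fun x => A.indicator g x := by
    funext x
    by_cases hx : x ∈ A <;> simp [indf, hx]
  rw [h1, setIntegral_indicator hAm, Set.inter_eq_self_of_subset_right hAs]

lemma mes_nonneg (G : Ω → Measure ℝ) (S : Set ℝ) (ω : Ω) : 0 ≤ mes G S ω :=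
  ENNReal.toReal_nonneg

lemma key_int (model : IsDispersalModel P n lam mu σ f M N)
    (hA₁m : MeasurableSet A₁) (hA₂m : MeasurableSet A₂)
    (hB₁m : MeasurableSet B₁) (hB₂m : MeasurableSet B₂)
    (hB₁b : Bornology.IsBounded B₁) (hB₂b : Bornology.IsBounded B₂)
    (hBd : Disjoint B₁ B₂) (a b c d : ℝ) :
    Integrable (fun ω => Real.exp (a * mes M A₁ ω + (b * mes M A₂ ω
      + (c * mes N B₁ ω + d * mes N B₂ ω)))) P := by
  by_contra hcon
  have h := lap_eq model hA₁m hA₂m hB₁m hB₂m hB₁b hB₂b hBd a b c d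
  rw [integral_undef hcon] at h
  exact (Real.exp_pos _).ne' h.symm

lemma tot_int (model : IsDispersalModel P n lam mu σ f M N)
    (hA₁m : MeasurableSet A₁) (hA₂m : MeasurableSet A₂)
    (hB₁m : MeasurableSet B₁) (hB₂m : MeasurableSet B₂)
    (hB₁b : Bornology.IsBounded B₁) (hB₂b : Bornology.IsBounded B₂)
    (hBd : Disjoint B₁ B₂) (t : ℝ) :
    Integrable (fun ω => Real.exp (t * tot M N A₁ A₂ B₁ B₂ ω)) P := by
  have h := key_int model hA₁m hA₂m hB₁m hB₂m hB₁b hB₂b hBd t t t t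
  have h2 : (fun ω => Real.exp (t * mes M A₁ ω + (t * mes M A₂ ω
      + (t * mes N B₁ ω + t * mes N B₂ ω))))
      = fun ω => Real.exp (t * tot M N A₁ A₂ B₁ B₂ ω) := by
    funext ω
    unfold tot
    ring_nf
  rwa [h2] at h

end Master2

section Master3

variable {Ω : Type*} [MeasurableSpace Ω] {P : Measure Ω} {n : ℕ} {lam mu σ : ℝ}
  {f : ℝ → ℝ} {M N : Ω → Measure ℝ} {A A₁ A₂ B B₁ B₂ : Set ℝ}

lemma ball_abs_le {s₀ s : ℝ} (hs : s ∈ Metric.ball s₀ 1) : |s| ≤ |s₀| + 1 := by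
  have h := Metric.mem_ball.1 hs
  rw [Real.dist_eq] at h
  have := abs_sub_abs_le_abs_sub s s₀
  linarith

lemma phi_bound (mu : ℝ) {s : ℝ} (hs : s ∈ Metric.ball (0:ℝ) 1) :
    |mu * (Real.exp s - 1)| ≤ |mu| * (Real.exp 1 + 1)
      ∧ |mu * Real.exp s| ≤ |mu| * (Real.exp 1 + 1) := by
  have hs1 : |s| ≤ 1 := by simpa using ball_abs_le hs
  have he : Real.exp s ≤ Real.exp 1 := Real.exp_le_exp.2 (le_trans (le_abs_self s) hs1)
  have hep := Real.exp_pos s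
  constructor
  · rw [abs_mul]
    have : |Real.exp s - 1| ≤ Real.exp 1 + 1 := by
      rw [abs_sub_le_iff]
      constructor <;> nlinarith [Real.exp_pos (1:ℝ)]
    nlinarith [abs_nonneg mu]
  · rw [abs_mul, Real.abs_exp]
    nlinarith [abs_nonneg mu, Real.exp_pos (1:ℝ)]

lemma hasDerivAt_phi (mu : ℝ) (s : ℝ) :
    HasDerivAt (fun c => mu * (Real.exp c - 1)) (mu * Real.exp s) s :=
  ((Real.hasDerivAt_exp s).sub_const 1).const_mul mu

lemma EE_derivA (hσ : 0 < σ) (hfm : Measurable f) (hf0 : ∀ z, 0 ≤ f z)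
    (hfp : ∫ z, f z = 1) (hA₁m : MeasurableSet A₁) (hA₂m : MeasurableSet A₂)
    (hA₁s : A₁ ⊆ Set.Icc (0:ℝ) 1) (hAd : Disjoint A₁ A₂)
    (hB₁m : MeasurableSet B₁) (hB₂m : MeasurableSet B₂) (b c d : ℝ) :
    HasDerivAt (fun a => EE mu σ f A₁ A₂ B₁ B₂ a b c d)
      (PPc mu σ f A₁ B₁ B₂ c d) 0 := by
  have hkm := kap_meas (mu := mu) hσ hfm hB₁m hB₂m c d
  have hkb := kap_abs_le (mu := mu) (B₁ := B₁) (B₂ := B₂) hσ hfm hf0 hfp c d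
  set K0 : ℝ := |mu| * (Real.exp |c| + 1) + |mu| * (Real.exp |d| + 1) with hK0
  have hRb : ∀ x, |b * indf A₂ x + kap mu σ f B₁ B₂ c d x| ≤ |b| + K0 := by
    intro x
    calc |b * indf A₂ x + kap mu σ f B₁ B₂ c d x|
        ≤ |b * indf A₂ x| + |kap mu σ f B₁ B₂ c d x| := abs_add_le _ _
      _ ≤ |b| + K0 := by
          rw [abs_mul]
          have h1 := indf_abs_le_one A₂ x
          have h2 := hkb x
          nlinarith [abs_nonneg b, abs_nonneg (indf A₂ x)]
  have hd := x_deriv (A := Set.Icc (0:ℝ) 1) vol_Icc_fin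
    (V := fun _ => (1:ℝ)) (U := indf A₁)
    (R := fun x => b * indf A₂ x + kap mu σ f B₁ B₂ c d x)
    measurable_const (indf_meas hA₁m) (((indf_meas hA₂m).const_mul b).add hkm)
    (KV := 1) (KU := 1) (KR := |b| + K0)
    (fun _ => by norm_num) (indf_abs_le_one A₁) hRb
    (φ := fun s => s) (φ' := fun _ => 1) (fun s => hasDerivAt_id s) (Kφ := 1) 0
    (fun s hs => ⟨by simpa using (ball_abs_le hs), by norm_num⟩)
  simp only [one_mul, zero_mul, zero_add] at hd
  rw [pull_ind hA₁m hA₁s] at hd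
  have hval : (∫ x in A₁, Real.exp (b * indf A₂ x + kap mu σ f B₁ B₂ c d x))
      = PPc mu σ f A₁ B₁ B₂ c d := by
    unfold PPc
    apply setIntegral_congr_fun hA₁m
    intro x hx
    have hx2 : x ∉ A₂ := Set.disjoint_left.1 hAd hx
    simp [indf, hx2]
  rw [hval] at hd
  exact hd

lemma EE2_derivB (hσ : 0 < σ) (hfm : Measurable f) (hf0 : ∀ z, 0 ≤ f z)
    (hfp : ∫ z, f z = 1) (hA₂m : MeasurableSet A₂) (hA₂s : A₂ ⊆ Set.Icc (0:ℝ) 1)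
    (hB₁m : MeasurableSet B₁) (hB₂m : MeasurableSet B₂) (c d : ℝ) :
    HasDerivAt (fun b => EE2 mu σ f A₂ B₁ B₂ b c d)
      (PPc mu σ f A₂ B₁ B₂ c d) 0 := by
  have hkm := kap_meas (mu := mu) hσ hfm hB₁m hB₂m c d
  have hkb := kap_abs_le (mu := mu) (B₁ := B₁) (B₂ := B₂) hσ hfm hf0 hfp c d
  set K0 : ℝ := |mu| * (Real.exp |c| + 1) + |mu| * (Real.exp |d| + 1) with hK0
  have hd := x_deriv (A := Set.Icc (0:ℝ) 1) vol_Icc_fin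
    (V := fun _ => (1:ℝ)) (U := indf A₂)
    (R := kap mu σ f B₁ B₂ c d)
    measurable_const (indf_meas hA₂m) hkm
    (KV := 1) (KU := 1) (KR := K0)
    (fun _ => by norm_num) (indf_abs_le_one A₂) hkb
    (φ := fun s => s) (φ' := fun _ => 1) (fun s => hasDerivAt_id s) (Kφ := 1) 0
    (fun s hs => ⟨by simpa using (ball_abs_le hs), by norm_num⟩)
  simp only [one_mul, zero_mul, zero_add] at hd
  rw [pull_ind hA₂m hA₂s] at hd
  exact hd

lemma PPc_derivC (hσ : 0 < σ) (hfm : Measurable f) (hf0 : ∀ z, 0 ≤ f z)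
    (hfp : ∫ z, f z = 1) (hAfin : volume A ≠ ⊤)
    (hB₁m : MeasurableSet B₁) (hB₂m : MeasurableSet B₂) (d : ℝ) :
    HasDerivAt (fun c => PPc mu σ f A B₁ B₂ c d)
      (mu * TT mu σ f A B₁ B₂ d) 0 := by
  have hq₁m := qf_meas hσ hfm hB₁m
  have hq₂m := qf_meas hσ hfm hB₂m
  have hd := x_deriv (A := A) hAfin
    (V := fun _ => (1:ℝ)) (U := qf σ f B₁)
    (R := fun x => mu * (Real.exp d - 1) * qf σ f B₂ x)
    measurable_const hq₁m (hq₂m.const_mul _)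
    (KV := 1) (KU := 1) (KR := |mu * (Real.exp d - 1)|)
    (fun _ => by norm_num) (qf_abs_le_one hσ hfm hf0 hfp B₁) (fun x => by
      rw [abs_mul]
      have := qf_abs_le_one hσ hfm hf0 hfp B₂ x
      nlinarith [abs_nonneg (mu * (Real.exp d - 1)), abs_nonneg (qf σ f B₂ x)])
    (φ := fun c => mu * (Real.exp c - 1)) (φ' := fun s => mu * Real.exp s)
    (hasDerivAt_phi mu) (Kφ := |mu| * (Real.exp 1 + 1)) 0
    (fun s hs => phi_bound mu hs)
  simp only [one_mul, Real.exp_zero, sub_self, mul_zero, zero_mul, zero_add, mul_one] at hd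
  have hpull : (∫ x in A, mu * qf σ f B₁ x
        * Real.exp (mu * (Real.exp d - 1) * qf σ f B₂ x))
      = mu * TT mu σ f A B₁ B₂ d := by
    rw [show (fun x => mu * qf σ f B₁ x * Real.exp (mu * (Real.exp d - 1) * qf σ f B₂ x))
        = fun x => mu * (qf σ f B₁ x * Real.exp (mu * (Real.exp d - 1) * qf σ f B₂ x))
      from funext fun x => by ring]
    exact integral_const_mul _ _
  rw [hpull] at hd
  exact hd

lemma PP_derivD (hσ : 0 < σ) (hfm : Measurable f) (hf0 : ∀ z, 0 ≤ f z)
    (hfp : ∫ z, f z = 1) (hAfin : volume A ≠ ⊤) (hB₂m : MeasurableSet B₂) :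
    HasDerivAt (PP mu σ f A B₂) (mu * Qker σ f A B₂) 0 := by
  have hq₂m := qf_meas hσ hfm hB₂m
  have hd := x_deriv (A := A) hAfin
    (V := fun _ => (1:ℝ)) (U := qf σ f B₂) (R := fun _ => (0:ℝ))
    measurable_const hq₂m measurable_const
    (KV := 1) (KU := 1) (KR := 0)
    (fun _ => by norm_num) (qf_abs_le_one hσ hfm hf0 hfp B₂) (fun x => by norm_num)
    (φ := fun c => mu * (Real.exp c - 1)) (φ' := fun s => mu * Real.exp s)
    (hasDerivAt_phi mu) (Kφ := |mu| * (Real.exp 1 + 1)) 0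
    (fun s hs => phi_bound mu hs)
  simp only [one_mul, Real.exp_zero, sub_self, mul_zero, zero_mul, zero_add, add_zero,
    mul_one] at hd
  have hpull : (∫ x in A, mu * qf σ f B₂ x) = mu * Qker σ f A B₂ := by
    rw [Qker_eq]
    exact integral_const_mul _ _
  rw [hpull] at hd
  exact hd

lemma TT_derivD (hσ : 0 < σ) (hfm : Measurable f) (hf0 : ∀ z, 0 ≤ f z)
    (hfp : ∫ z, f z = 1) (hAfin : volume A ≠ ⊤)
    (hB₁m : MeasurableSet B₁) (hB₂m : MeasurableSet B₂) :
    HasDerivAt (TT mu σ f A B₁ B₂) (mu * Q2ker σ f A B₁ B₂) 0 := by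
  have hq₁m := qf_meas hσ hfm hB₁m
  have hq₂m := qf_meas hσ hfm hB₂m
  have hd := x_deriv (A := A) hAfin
    (V := qf σ f B₁) (U := qf σ f B₂) (R := fun _ => (0:ℝ))
    hq₁m hq₂m measurable_const
    (KV := 1) (KU := 1) (KR := 0)
    (qf_abs_le_one hσ hfm hf0 hfp B₁) (qf_abs_le_one hσ hfm hf0 hfp B₂) (fun x => by norm_num)
    (φ := fun c => mu * (Real.exp c - 1)) (φ' := fun s => mu * Real.exp s)
    (hasDerivAt_phi mu) (Kφ := |mu| * (Real.exp 1 + 1)) 0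
    (fun s hs => phi_bound mu hs)
  simp only [one_mul, Real.exp_zero, sub_self, mul_zero, zero_mul, zero_add, add_zero,
    mul_one] at hd
  have hpull : (∫ x in A, qf σ f B₁ x * (mu * qf σ f B₂ x))
      = mu * Q2ker σ f A B₁ B₂ := by
    rw [Q2ker_eq,
      show (fun x => qf σ f B₁ x * (mu * qf σ f B₂ x))
        = fun x => mu * (qf σ f B₁ x * qf σ f B₂ x) from funext fun x => by ring]
    exact integral_const_mul _ _
  rw [hpull] at hd
  exact hd

end Master3

section Master4

variable {Ω : Type*} [MeasurableSpace Ω] {P : Measure Ω} {n : ℕ} {lam mu σ : ℝ}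
  {f : ℝ → ℝ} {M N : Ω → Measure ℝ} {A A₁ A₂ B B₁ B₂ : Set ℝ}

lemma Vexp1 {x t : ℝ} (hx : 0 ≤ x) (hxt : x ≤ t) : |x| ≤ Real.exp (1 * t) := by
  rw [abs_of_nonneg hx, one_mul]
  have h0t : 0 ≤ t := le_trans hx hxt
  linarith [Real.add_one_le_exp t]

lemma Vexp2 {x y t : ℝ} (hx : 0 ≤ x) (hy : 0 ≤ y) (hxt : x ≤ t) (hyt : y ≤ t) :
    |x * y| ≤ Real.exp (2 * t) := by
  rw [abs_of_nonneg (mul_nonneg hx hy)]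
  have h0t : 0 ≤ t := le_trans hx hxt
  have het : t ≤ Real.exp t := by linarith [Real.add_one_le_exp t]
  calc x * y ≤ t * t := mul_le_mul hxt hyt hy h0t
    _ ≤ Real.exp t * Real.exp t := mul_le_mul het het h0t (Real.exp_pos t).le
    _ = Real.exp (2 * t) := by rw [← Real.exp_add]; ring_nf

lemma Vexp3 {x y z t : ℝ} (hx : 0 ≤ x) (hy : 0 ≤ y) (hz : 0 ≤ z)
    (hxt : x ≤ t) (hyt : y ≤ t) (hzt : z ≤ t) :
    |x * y * z| ≤ Real.exp (3 * t) := by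
  rw [abs_of_nonneg (mul_nonneg (mul_nonneg hx hy) hz)]
  have h0t : 0 ≤ t := le_trans hx hxt
  have het : t ≤ Real.exp t := by linarith [Real.add_one_le_exp t]
  have hep := (Real.exp_pos t).le
  calc x * y * z ≤ t * t * t := by
        have h1 : x * y ≤ t * t := mul_le_mul hxt hyt hy h0t
        have h2 : x * y * z ≤ t * t * z := mul_le_mul_of_nonneg_right h1 hz
        have h3 : t * t * z ≤ t * t * t := mul_le_mul_of_nonneg_left hzt (by positivity)
        linarith
    _ ≤ Real.exp t * Real.exp t * Real.exp t := by
        have h1 : t * t ≤ Real.exp t * Real.exp t := mul_le_mul het het h0t hep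
        have h2 : t * t * t ≤ Real.exp t * Real.exp t * Real.exp t :=
          mul_le_mul h1 het h0t (by positivity)
        linarith
    _ = Real.exp (3 * t) := by rw [← Real.exp_add, ← Real.exp_add]; ring_nf

lemma Rbound3 {X Y Z W : ℝ} (hX : 0 ≤ X) (hY : 0 ≤ Y) (hZ : 0 ≤ Z) (hW : 0 ≤ W)
    (b c d : ℝ) : |b * Y + (c * Z + d * W)| ≤ (|b| + |c| + |d|) * (X + Y + Z + W) := by
  have h1 : |b * Y + (c * Z + d * W)| ≤ |b| * Y + (|c| * Z + |d| * W) := by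
    calc |b * Y + (c * Z + d * W)| ≤ |b * Y| + |c * Z + d * W| := abs_add_le _ _
      _ ≤ |b * Y| + (|c * Z| + |d * W|) := by linarith [abs_add_le (c * Z) (d * W)]
      _ = |b| * Y + (|c| * Z + |d| * W) := by
          rw [abs_mul, abs_mul, abs_mul, abs_of_nonneg hY, abs_of_nonneg hZ, abs_of_nonneg hW]
  have p1 : 0 ≤ |b| * (X + Z + W) := by positivity
  have p2 : 0 ≤ |c| * (X + Y + W) := by positivity
  have p3 : 0 ≤ |d| * (X + Y + Z) := by positivity
  nlinarith

lemma Rbound2 {X Y Z W : ℝ} (hX : 0 ≤ X) (hY : 0 ≤ Y) (hZ : 0 ≤ Z) (hW : 0 ≤ W)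
    (c d : ℝ) : |c * Z + d * W| ≤ (|c| + |d|) * (X + Y + Z + W) := by
  have h1 : |c * Z + d * W| ≤ |c| * Z + |d| * W := by
    calc |c * Z + d * W| ≤ |c * Z| + |d * W| := abs_add_le _ _
      _ = |c| * Z + |d| * W := by rw [abs_mul, abs_mul, abs_of_nonneg hZ, abs_of_nonneg hW]
  have p1 : 0 ≤ |c| * (X + Y + W) := by positivity
  have p2 : 0 ≤ |d| * (X + Y + Z) := by positivity
  nlinarith

lemma Rbound1 {X Y Z W : ℝ} (hX : 0 ≤ X) (hY : 0 ≤ Y) (hZ : 0 ≤ Z) (hW : 0 ≤ W)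
    (d : ℝ) : |d * W| ≤ |d| * (X + Y + Z + W) := by
  rw [abs_mul, abs_of_nonneg hW]
  have p1 : 0 ≤ |d| * (X + Y + Z) := by positivity
  nlinarith

lemma step1 (model : IsDispersalModel P n lam mu σ f M N)
    (hA₁m : MeasurableSet A₁) (hA₂m : MeasurableSet A₂)
    (hA₁s : A₁ ⊆ Set.Icc (0:ℝ) 1) (hAd : Disjoint A₁ A₂)
    (hB₁m : MeasurableSet B₁) (hB₂m : MeasurableSet B₂)
    (hB₁b : Bornology.IsBounded B₁) (hB₂b : Bornology.IsBounded B₂)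
    (hBd : Disjoint B₁ B₂) (b c d : ℝ) :
    ∫ ω, mes M A₁ ω * Real.exp (b * mes M A₂ ω + (c * mes N B₁ ω + d * mes N B₂ ω)) ∂P
      = (↑n * lam) * PPc mu σ f A₁ B₁ B₂ c d
        * Real.exp ((↑n * lam) * (EE2 mu σ f A₂ B₁ B₂ b c d - 1)) := by
  have hσ := model.sigma_pos
  have hfm := model.f_meas
  have hf0 := model.f_nonneg
  have hfp := model.f_prob
  have hXm : Measurable (mes M A₁) := (model.M_meas A₁ hA₁m).ennreal_toReal
  have hYm : Measurable (mes M A₂) := (model.M_meas A₂ hA₂m).ennreal_toReal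
  have hZm : Measurable (mes N B₁) := (model.N_meas B₁ hB₁m).ennreal_toReal
  have hWm : Measurable (mes N B₂) := (model.N_meas B₂ hB₂m).ennreal_toReal
  have hT0 : ∀ ω, 0 ≤ tot M N A₁ A₂ B₁ B₂ ω := fun ω => by
    unfold tot
    have := mes_nonneg M A₁ ω; have := mes_nonneg M A₂ ω
    have := mes_nonneg N B₁ ω; have := mes_nonneg N B₂ ω
    linarith
  have hfuns : (fun a => ∫ ω, Real.exp (a * mes M A₁ ω + (b * mes M A₂ ω
      + (c * mes N B₁ ω + d * mes N B₂ ω))) ∂P)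
      = fun a => Real.exp ((↑n * lam) * (EE mu σ f A₁ A₂ B₁ B₂ a b c d - 1)) :=
    funext fun a => lap_eq model hA₁m hA₂m hB₁m hB₂m hB₁b hB₂b hBd a b c d
  have hΩ := omega_deriv (P := P) (tot M N A₁ A₂ B₁ B₂) hT0
    (tot_int model hA₁m hA₂m hB₁m hB₂m hB₁b hB₂b hBd)
    (V := fun _ => (1:ℝ)) (U := mes M A₁)
    (R := fun ω => b * mes M A₂ ω + (c * mes N B₁ ω + d * mes N B₂ ω))
    measurable_const hXm ((hYm.const_mul b).add ((hZm.const_mul c).add (hWm.const_mul d)))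
    (KV := 0) (KR := |b| + |c| + |d|)
    (fun ω => by simp) (fun ω => mes_nonneg M A₁ ω)
    (fun ω => by
      unfold tot
      have := mes_nonneg M A₂ ω; have := mes_nonneg N B₁ ω; have := mes_nonneg N B₂ ω
      linarith)
    (fun ω => by
      unfold tot
      exact Rbound3 (mes_nonneg M A₁ ω) (mes_nonneg M A₂ ω) (mes_nonneg N B₁ ω)
        (mes_nonneg N B₂ ω) b c d) 0
  simp only [one_mul, zero_mul, zero_add] at hΩ
  rw [hfuns] at hΩ
  have hEa := EE_derivA (mu := mu) hσ hfm hf0 hfp hA₁m hA₂m hA₁s hAd hB₁m hB₂m b c d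
  have hG := ((hEa.sub_const 1).const_mul ((n:ℝ) * lam)).exp
  have hval := hΩ.unique hG
  rw [hval, EE_zero]
  ring

lemma step2 (model : IsDispersalModel P n lam mu σ f M N)
    (hA₁m : MeasurableSet A₁) (hA₂m : MeasurableSet A₂)
    (hA₁s : A₁ ⊆ Set.Icc (0:ℝ) 1) (hA₂s : A₂ ⊆ Set.Icc (0:ℝ) 1) (hAd : Disjoint A₁ A₂)
    (hB₁m : MeasurableSet B₁) (hB₂m : MeasurableSet B₂)
    (hB₁b : Bornology.IsBounded B₁) (hB₂b : Bornology.IsBounded B₂)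
    (hBd : Disjoint B₁ B₂) (c d : ℝ) :
    ∫ ω, mes M A₁ ω * mes M A₂ ω * Real.exp (c * mes N B₁ ω + d * mes N B₂ ω) ∂P
      = (↑n * lam) * PPc mu σ f A₁ B₁ B₂ c d * ((↑n * lam) * PPc mu σ f A₂ B₁ B₂ c d)
        * Real.exp ((↑n * lam) * (PPc mu σ f (Set.Icc (0:ℝ) 1) B₁ B₂ c d - 1)) := by
  have hσ := model.sigma_pos
  have hfm := model.f_meas
  have hf0 := model.f_nonneg
  have hfp := model.f_prob
  have hXm : Measurable (mes M A₁) := (model.M_meas A₁ hA₁m).ennreal_toReal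
  have hYm : Measurable (mes M A₂) := (model.M_meas A₂ hA₂m).ennreal_toReal
  have hZm : Measurable (mes N B₁) := (model.N_meas B₁ hB₁m).ennreal_toReal
  have hWm : Measurable (mes N B₂) := (model.N_meas B₂ hB₂m).ennreal_toReal
  have hT0 : ∀ ω, 0 ≤ tot M N A₁ A₂ B₁ B₂ ω := fun ω => by
    unfold tot
    have := mes_nonneg M A₁ ω; have := mes_nonneg M A₂ ω
    have := mes_nonneg N B₁ ω; have := mes_nonneg N B₂ ω
    linarith
  have hfuns : (fun b => ∫ ω, mes M A₁ ω * Real.exp (b * mes M A₂ ω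
      + (c * mes N B₁ ω + d * mes N B₂ ω)) ∂P)
      = fun b => (↑n * lam) * PPc mu σ f A₁ B₁ B₂ c d
        * Real.exp ((↑n * lam) * (EE2 mu σ f A₂ B₁ B₂ b c d - 1)) :=
    funext fun b => step1 model hA₁m hA₂m hA₁s hAd hB₁m hB₂m hB₁b hB₂b hBd b c d
  have hΩ := omega_deriv (P := P) (tot M N A₁ A₂ B₁ B₂) hT0
    (tot_int model hA₁m hA₂m hB₁m hB₂m hB₁b hB₂b hBd)
    (V := mes M A₁) (U := mes M A₂)
    (R := fun ω => c * mes N B₁ ω + d * mes N B₂ ω)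
    hXm hYm ((hZm.const_mul c).add (hWm.const_mul d))
    (KV := 1) (KR := |c| + |d|)
    (fun ω => Vexp1 (mes_nonneg M A₁ ω) (by
      unfold tot
      have := mes_nonneg M A₂ ω; have := mes_nonneg N B₁ ω; have := mes_nonneg N B₂ ω
      linarith))
    (fun ω => mes_nonneg M A₂ ω)
    (fun ω => by
      unfold tot
      have := mes_nonneg M A₁ ω; have := mes_nonneg N B₁ ω; have := mes_nonneg N B₂ ω
      linarith)
    (fun ω => by
      unfold tot
      exact Rbound2 (mes_nonneg M A₁ ω) (mes_nonneg M A₂ ω) (mes_nonneg N B₁ ω)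
        (mes_nonneg N B₂ ω) c d) 0
  simp only [zero_mul, zero_add] at hΩ
  rw [hfuns] at hΩ
  have hEb := EE2_derivB (mu := mu) hσ hfm hf0 hfp hA₂m hA₂s hB₁m hB₂m c d
  have hG := (((hEb.sub_const 1).const_mul ((n:ℝ) * lam)).exp).const_mul
    ((↑n * lam) * PPc mu σ f A₁ B₁ B₂ c d)
  have hval := hΩ.unique hG
  rw [hval, EE2_zero]
  ring

end Master4

section Master5

variable {Ω : Type*} [MeasurableSpace Ω] {P : Measure Ω} {n : ℕ} {lam mu σ : ℝ}
  {f : ℝ → ℝ} {M N : Ω → Measure ℝ} {A A₁ A₂ B B₁ B₂ : Set ℝ}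

lemma step3 (model : IsDispersalModel P n lam mu σ f M N)
    (hA₁m : MeasurableSet A₁) (hA₂m : MeasurableSet A₂)
    (hA₁s : A₁ ⊆ Set.Icc (0:ℝ) 1) (hA₂s : A₂ ⊆ Set.Icc (0:ℝ) 1) (hAd : Disjoint A₁ A₂)
    (hB₁m : MeasurableSet B₁) (hB₂m : MeasurableSet B₂)
    (hB₁b : Bornology.IsBounded B₁) (hB₂b : Bornology.IsBounded B₂)
    (hBd : Disjoint B₁ B₂) (d : ℝ) :
    ∫ ω, mes M A₁ ω * mes M A₂ ω * mes N B₁ ω * Real.exp (d * mes N B₂ ω) ∂P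
      = (↑n * lam)^2 * mu * (TT mu σ f A₁ B₁ B₂ d * PP mu σ f A₂ B₂ d
          + PP mu σ f A₁ B₂ d * TT mu σ f A₂ B₁ B₂ d
          + (↑n * lam) * (PP mu σ f A₁ B₂ d * PP mu σ f A₂ B₂ d
              * TT mu σ f (Set.Icc (0:ℝ) 1) B₁ B₂ d))
        * Real.exp ((↑n * lam) * (PP mu σ f (Set.Icc (0:ℝ) 1) B₂ d - 1)) := by
  have hσ := model.sigma_pos
  have hfm := model.f_meas
  have hf0 := model.f_nonneg
  have hfp := model.f_prob
  have hXm : Measurable (mes M A₁) := (model.M_meas A₁ hA₁m).ennreal_toReal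
  have hYm : Measurable (mes M A₂) := (model.M_meas A₂ hA₂m).ennreal_toReal
  have hZm : Measurable (mes N B₁) := (model.N_meas B₁ hB₁m).ennreal_toReal
  have hWm : Measurable (mes N B₂) := (model.N_meas B₂ hB₂m).ennreal_toReal
  have hT0 : ∀ ω, 0 ≤ tot M N A₁ A₂ B₁ B₂ ω := fun ω => by
    unfold tot
    have := mes_nonneg M A₁ ω; have := mes_nonneg M A₂ ω
    have := mes_nonneg N B₁ ω; have := mes_nonneg N B₂ ω
    linarith
  have hfuns : (fun c => ∫ ω, mes M A₁ ω * mes M A₂ ω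
      * Real.exp (c * mes N B₁ ω + d * mes N B₂ ω) ∂P)
      = fun c => (↑n * lam) * PPc mu σ f A₁ B₁ B₂ c d
        * ((↑n * lam) * PPc mu σ f A₂ B₁ B₂ c d)
        * Real.exp ((↑n * lam) * (PPc mu σ f (Set.Icc (0:ℝ) 1) B₁ B₂ c d - 1)) :=
    funext fun c => step2 model hA₁m hA₂m hA₁s hA₂s hAd hB₁m hB₂m hB₁b hB₂b hBd c d
  have hΩ := omega_deriv (P := P) (tot M N A₁ A₂ B₁ B₂) hT0
    (tot_int model hA₁m hA₂m hB₁m hB₂m hB₁b hB₂b hBd)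
    (V := fun ω => mes M A₁ ω * mes M A₂ ω) (U := mes N B₁)
    (R := fun ω => d * mes N B₂ ω)
    (hXm.mul hYm) hZm (hWm.const_mul d)
    (KV := 2) (KR := |d|)
    (fun ω => by
      have h1 := mes_nonneg M A₁ ω; have h2 := mes_nonneg M A₂ ω
      have h3 := mes_nonneg N B₁ ω; have h4 := mes_nonneg N B₂ ω
      exact Vexp2 h1 h2 (by unfold tot; linarith) (by unfold tot; linarith))
    (fun ω => mes_nonneg N B₁ ω)
    (fun ω => by
      unfold tot
      have := mes_nonneg M A₁ ω; have := mes_nonneg M A₂ ω; have := mes_nonneg N B₂ ω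
      linarith)
    (fun ω => by
      unfold tot
      exact Rbound1 (mes_nonneg M A₁ ω) (mes_nonneg M A₂ ω) (mes_nonneg N B₁ ω)
        (mes_nonneg N B₂ ω) d) 0
  simp only [zero_mul, zero_add] at hΩ
  rw [hfuns] at hΩ
  have hP1 := (PPc_derivC (mu := mu) (A := A₁) hσ hfm hf0 hfp (vol_fin hA₁s)
    hB₁m hB₂m d).const_mul ((n:ℝ) * lam)
  have hP2 := (PPc_derivC (mu := mu) (A := A₂) hσ hfm hf0 hfp (vol_fin hA₂s)
    hB₁m hB₂m d).const_mul ((n:ℝ) * lam)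
  have hPI := (((PPc_derivC (mu := mu) (A := Set.Icc (0:ℝ) 1) hσ hfm hf0 hfp vol_Icc_fin
    hB₁m hB₂m d).sub_const 1).const_mul ((n:ℝ) * lam)).exp
  have hG := (hP1.mul hP2).mul hPI
  have hval := hΩ.unique hG
  rw [hval]
  simp only [PPc_zero, Pi.mul_apply]
  ring

lemma step4 (model : IsDispersalModel P n lam mu σ f M N)
    (hA₁m : MeasurableSet A₁) (hA₂m : MeasurableSet A₂)
    (hA₁s : A₁ ⊆ Set.Icc (0:ℝ) 1) (hA₂s : A₂ ⊆ Set.Icc (0:ℝ) 1) (hAd : Disjoint A₁ A₂)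
    (hB₁m : MeasurableSet B₁) (hB₂m : MeasurableSet B₂)
    (hB₁b : Bornology.IsBounded B₁) (hB₂b : Bornology.IsBounded B₂)
    (hBd : Disjoint B₁ B₂) :
    ∫ ω, mes M A₁ ω * mes M A₂ ω * mes N B₁ ω * mes N B₂ ω ∂P
      = (↑n * lam)^2 * mu^2 * (Q2ker σ f A₁ B₁ B₂ * (volume A₂).toReal
          + Qker σ f A₁ B₁ * Qker σ f A₂ B₂ + Qker σ f A₁ B₂ * Qker σ f A₂ B₁
          + (volume A₁).toReal * Q2ker σ f A₂ B₁ B₂)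
        + (↑n * lam)^3 * mu^2 * (Qker σ f A₁ B₂ * (volume A₂).toReal
              * Qker σ f (Set.Icc (0:ℝ) 1) B₁
            + (volume A₁).toReal * Qker σ f A₂ B₂ * Qker σ f (Set.Icc (0:ℝ) 1) B₁
            + (volume A₁).toReal * (volume A₂).toReal * Q2ker σ f (Set.Icc (0:ℝ) 1) B₁ B₂
            + Qker σ f A₁ B₁ * (volume A₂).toReal * Qker σ f (Set.Icc (0:ℝ) 1) B₂
            + (volume A₁).toReal * Qker σ f A₂ B₁ * Qker σ f (Set.Icc (0:ℝ) 1) B₂)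
        + (↑n * lam)^4 * mu^2 * (volume A₁).toReal * (volume A₂).toReal
            * Qker σ f (Set.Icc (0:ℝ) 1) B₁ * Qker σ f (Set.Icc (0:ℝ) 1) B₂ := by
  have hσ := model.sigma_pos
  have hfm := model.f_meas
  have hf0 := model.f_nonneg
  have hfp := model.f_prob
  have hXm : Measurable (mes M A₁) := (model.M_meas A₁ hA₁m).ennreal_toReal
  have hYm : Measurable (mes M A₂) := (model.M_meas A₂ hA₂m).ennreal_toReal
  have hZm : Measurable (mes N B₁) := (model.N_meas B₁ hB₁m).ennreal_toReal
  have hWm : Measurable (mes N B₂) := (model.N_meas B₂ hB₂m).ennreal_toReal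
  have hT0 : ∀ ω, 0 ≤ tot M N A₁ A₂ B₁ B₂ ω := fun ω => by
    unfold tot
    have := mes_nonneg M A₁ ω; have := mes_nonneg M A₂ ω
    have := mes_nonneg N B₁ ω; have := mes_nonneg N B₂ ω
    linarith
  have hfuns : (fun d => ∫ ω, mes M A₁ ω * mes M A₂ ω * mes N B₁ ω
      * Real.exp (d * mes N B₂ ω) ∂P)
      = fun d => (↑n * lam)^2 * mu * (TT mu σ f A₁ B₁ B₂ d * PP mu σ f A₂ B₂ d
          + PP mu σ f A₁ B₂ d * TT mu σ f A₂ B₁ B₂ d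
          + (↑n * lam) * (PP mu σ f A₁ B₂ d * PP mu σ f A₂ B₂ d
              * TT mu σ f (Set.Icc (0:ℝ) 1) B₁ B₂ d))
        * Real.exp ((↑n * lam) * (PP mu σ f (Set.Icc (0:ℝ) 1) B₂ d - 1)) :=
    funext fun d => step3 model hA₁m hA₂m hA₁s hA₂s hAd hB₁m hB₂m hB₁b hB₂b hBd d
  have hΩ := omega_deriv (P := P) (tot M N A₁ A₂ B₁ B₂) hT0
    (tot_int model hA₁m hA₂m hB₁m hB₂m hB₁b hB₂b hBd)
    (V := fun ω => mes M A₁ ω * mes M A₂ ω * mes N B₁ ω) (U := mes N B₂)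
    (R := fun _ => (0:ℝ))
    ((hXm.mul hYm).mul hZm) hWm measurable_const
    (KV := 3) (KR := 0)
    (fun ω => by
      have h1 := mes_nonneg M A₁ ω; have h2 := mes_nonneg M A₂ ω
      have h3 := mes_nonneg N B₁ ω; have h4 := mes_nonneg N B₂ ω
      exact Vexp3 h1 h2 h3 (by unfold tot; linarith) (by unfold tot; linarith)
        (by unfold tot; linarith))
    (fun ω => mes_nonneg N B₂ ω)
    (fun ω => by
      unfold tot
      have := mes_nonneg M A₁ ω; have := mes_nonneg M A₂ ω; have := mes_nonneg N B₁ ω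
      linarith)
    (fun ω => by simp) 0
  simp only [add_zero, zero_mul, Real.exp_zero, mul_one] at hΩ
  rw [hfuns] at hΩ
  have hTT1 := TT_derivD (mu := mu) (A := A₁) hσ hfm hf0 hfp (vol_fin hA₁s) hB₁m hB₂m
  have hTT2 := TT_derivD (mu := mu) (A := A₂) hσ hfm hf0 hfp (vol_fin hA₂s) hB₁m hB₂m
  have hTTI := TT_derivD (mu := mu) (A := Set.Icc (0:ℝ) 1) hσ hfm hf0 hfp vol_Icc_fin
    hB₁m hB₂m
  have hPP1 := PP_derivD (mu := mu) (A := A₁) (B₂ := B₂) hσ hfm hf0 hfp (vol_fin hA₁s) hB₂m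
  have hPP2 := PP_derivD (mu := mu) (A := A₂) (B₂ := B₂) hσ hfm hf0 hfp (vol_fin hA₂s) hB₂m
  have hPPI := PP_derivD (mu := mu) (A := Set.Icc (0:ℝ) 1) (B₂ := B₂) hσ hfm hf0 hfp
    vol_Icc_fin hB₂m
  have hF := (((hTT1.mul hPP2).add (hPP1.mul hTT2)).add
    (((hPP1.mul hPP2).mul hTTI).const_mul ((n:ℝ) * lam))).const_mul ((↑n * lam)^2 * mu)
  have hG := hF.mul (((hPPI.sub_const 1).const_mul ((n:ℝ) * lam)).exp)
  have hval := hΩ.unique hG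
  simp only [TT_zero, PP_zero, Real.volume_Icc, sub_zero, ENNReal.ofReal_one,
    ENNReal.toReal_one, sub_self, mul_zero, Real.exp_zero, mul_one, Pi.mul_apply, Pi.add_apply] at hval
  rw [hval]
  ring

lemma mixed2 (model : IsDispersalModel P n lam mu σ f M N)
    (hA₁m : MeasurableSet A₁) (hA₂m : MeasurableSet A₂)
    (hA₁s : A₁ ⊆ Set.Icc (0:ℝ) 1) (hAd : Disjoint A₁ A₂)
    (hB₁m : MeasurableSet B₁) (hB₂m : MeasurableSet B₂)
    (hB₁b : Bornology.IsBounded B₁) (hB₂b : Bornology.IsBounded B₂)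
    (hBd : Disjoint B₁ B₂) :
    ∫ ω, mes M A₁ ω * mes N B₁ ω ∂P
      = (↑n * lam)^2 * mu * (volume A₁).toReal * Qker σ f (Set.Icc (0:ℝ) 1) B₁
        + (↑n * lam) * mu * Qker σ f A₁ B₁ := by
  have hσ := model.sigma_pos
  have hfm := model.f_meas
  have hf0 := model.f_nonneg
  have hfp := model.f_prob
  have hXm : Measurable (mes M A₁) := (model.M_meas A₁ hA₁m).ennreal_toReal
  have hZm : Measurable (mes N B₁) := (model.N_meas B₁ hB₁m).ennreal_toReal
  have hT0 : ∀ ω, 0 ≤ tot M N A₁ A₂ B₁ B₂ ω := fun ω => by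
    unfold tot
    have := mes_nonneg M A₁ ω; have := mes_nonneg M A₂ ω
    have := mes_nonneg N B₁ ω; have := mes_nonneg N B₂ ω
    linarith
  have hstep : ∀ c : ℝ, ∫ ω, mes M A₁ ω * Real.exp (c * mes N B₁ ω) ∂P
      = (↑n * lam) * PPc mu σ f A₁ B₁ B₂ c 0
        * Real.exp ((↑n * lam) * (PPc mu σ f (Set.Icc (0:ℝ) 1) B₁ B₂ c 0 - 1)) := by
    intro c
    have h := step1 model hA₁m hA₂m hA₁s hAd hB₁m hB₂m hB₁b hB₂b hBd 0 c 0
    rw [EE2_zero] at h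
    simpa only [zero_mul, zero_add, add_zero] using h
  have hfuns : (fun c => ∫ ω, mes M A₁ ω * Real.exp (c * mes N B₁ ω) ∂P)
      = fun c => (↑n * lam) * PPc mu σ f A₁ B₁ B₂ c 0
        * Real.exp ((↑n * lam) * (PPc mu σ f (Set.Icc (0:ℝ) 1) B₁ B₂ c 0 - 1)) :=
    funext hstep
  have hΩ := omega_deriv (P := P) (tot M N A₁ A₂ B₁ B₂) hT0
    (tot_int model hA₁m hA₂m hB₁m hB₂m hB₁b hB₂b hBd)
    (V := mes M A₁) (U := mes N B₁) (R := fun _ => (0:ℝ))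
    hXm hZm measurable_const
    (KV := 1) (KR := 0)
    (fun ω => Vexp1 (mes_nonneg M A₁ ω) (by
      unfold tot
      have := mes_nonneg M A₂ ω; have := mes_nonneg N B₁ ω; have := mes_nonneg N B₂ ω
      linarith))
    (fun ω => mes_nonneg N B₁ ω)
    (fun ω => by
      unfold tot
      have := mes_nonneg M A₁ ω; have := mes_nonneg M A₂ ω; have := mes_nonneg N B₂ ω
      linarith)
    (fun ω => by simp) 0
  simp only [add_zero, zero_mul, Real.exp_zero, mul_one] at hΩ
  rw [hfuns] at hΩ
  have hP1 := (PPc_derivC (mu := mu) (A := A₁) hσ hfm hf0 hfp (vol_fin hA₁s)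
    hB₁m hB₂m 0).const_mul ((n:ℝ) * lam)
  have hPI := (((PPc_derivC (mu := mu) (A := Set.Icc (0:ℝ) 1) hσ hfm hf0 hfp vol_Icc_fin
    hB₁m hB₂m 0).sub_const 1).const_mul ((n:ℝ) * lam)).exp
  have hG := hP1.mul hPI
  have hval := hΩ.unique hG
  simp only [TT_zero, PPc_zero, PP_zero, Real.volume_Icc, sub_zero, ENNReal.ofReal_one,
    ENNReal.toReal_one, sub_self, mul_zero, Real.exp_zero, mul_one] at hval
  rw [hval]
  ring

end Master5


end Aux

/-- Lemma 16(iv): fourth mixed moment `E[M(A₁)M(A₂)N(B₁)N(B₂)]`. -/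
theorem dispersal_fourth_moment_MMNN
    {Ω : Type*} [MeasurableSpace Ω] (P : Measure Ω)
    (n : ℕ) (lam mu σ : ℝ) (f : ℝ → ℝ) (M N : Ω → Measure ℝ)
    (model : IsDispersalModel P n lam mu σ f M N)
    (A₁ A₂ B₁ B₂ : Set ℝ)
    (hA₁meas : MeasurableSet A₁) (hA₂meas : MeasurableSet A₂)
    (hA₁int : A₁.OrdConnected) (hA₂int : A₂.OrdConnected)
    (hA₁sub : A₁ ⊆ Set.Icc (0:ℝ) 1) (hA₂sub : A₂ ⊆ Set.Icc (0:ℝ) 1)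
    (hAdisj : Disjoint A₁ A₂)
    (hB₁meas : MeasurableSet B₁) (hB₂meas : MeasurableSet B₂)
    (hB₁int : B₁.OrdConnected) (hB₂int : B₂.OrdConnected)
    (hB₁bdd : Bornology.IsBounded B₁) (hB₂bdd : Bornology.IsBounded B₂)
    (hBdisj : Disjoint B₁ B₂) :
    (∫ ω, (M ω A₁).toReal * (M ω A₂).toReal * (N ω B₁).toReal * (N ω B₂).toReal ∂P
      = (∫ ω, (M ω A₁).toReal * (N ω B₁).toReal ∂P)
          * (∫ ω, (M ω A₂).toReal * (N ω B₂).toReal ∂P)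
        + (n : ℝ)^3 * lam^3 * mu^2 *
            ((volume A₁).toReal * Qker σ f A₂ B₁ * Qker σ f (Set.Icc (0:ℝ) 1) B₂
              + (volume A₂).toReal * Qker σ f (Set.Icc (0:ℝ) 1) B₁ * Qker σ f A₁ B₂
              + (volume A₁).toReal * (volume A₂).toReal
                  * Q2ker σ f (Set.Icc (0:ℝ) 1) B₁ B₂)
        + (n : ℝ)^2 * lam^2 * mu^2 *
            (Qker σ f A₂ B₁ * Qker σ f A₁ B₂
              + (volume A₁).toReal * Q2ker σ f A₂ B₁ B₂
              + (volume A₂).toReal * Q2ker σ f A₁ B₁ B₂))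
    ∧ (∀ A B : Set ℝ, MeasurableSet A → A ⊆ Set.Icc (0:ℝ) 1 →
        MeasurableSet B → Bornology.IsBounded B →
        ∫ ω, (M ω A).toReal * (N ω B).toReal ∂P
          = (n : ℝ)^2 * lam^2 * mu * (volume A).toReal * Qker σ f (Set.Icc (0:ℝ) 1) B
            + (n : ℝ) * lam * mu * Qker σ f A B) := by
  constructor
  · have h4 := step4 model hA₁meas hA₂meas hA₁sub hA₂sub hAdisj hB₁meas hB₂meas
      hB₁bdd hB₂bdd hBdisj
    have h11 := mixed2 (A₂ := ∅) (B₂ := ∅) model hA₁meas MeasurableSet.empty hA₁sub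
      disjoint_bot_right hB₁meas MeasurableSet.empty hB₁bdd Bornology.isBounded_empty
      disjoint_bot_right
    have h22 := mixed2 (A₁ := A₂) (A₂ := ∅) (B₁ := B₂) (B₂ := ∅) model hA₂meas
      MeasurableSet.empty hA₂sub disjoint_bot_right hB₂meas MeasurableSet.empty hB₂bdd
      Bornology.isBounded_empty disjoint_bot_right
    unfold mes at h4 h11 h22
    rw [h4, h11, h22]
    ring
  · intro A B hAm hAs hBm hBb
    have h := mixed2 (A₁ := A) (A₂ := ∅) (B₁ := B) (B₂ := ∅) model hAm
      MeasurableSet.empty hAs disjoint_bot_right hBm MeasurableSet.empty hBb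
      Bornology.isBounded_empty disjoint_bot_right
    unfold mes at h
    rw [h]
    ring
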